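/- For a ∈ ℂ with a ≠ 0 and a ≠ k (where k ≥ 1), the Lie subalgebra of Der(ℂ[x,y]) spanned by a·x·∂/∂x + y·∂/∂y together with ∂/∂x, ∂/∂y, y·∂/∂x, …, y^k·∂/∂x is solvable and non-nilpotent, and its derived subalgebra equals the span of ∂/∂x, ∂/∂y, y·∂/∂x, …, y^k·∂/∂x. -/

import Mathlib

open MvPolynomial

noncomputable section

/-- The polynomial ring `ℂ[x,y]`, with `x = X 0`, `y = X 1`. -/
abbrev R2 : Type := MvPolynomial (Fin 2) ℂ

/-- The Lie algebra of derivations of `ℂ[x,y]`. -/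
abbrev Der2 : Type := Derivation ℂ R2 R2

/-- The variable `x`. -/
def Xv : R2 := X 0

/-- The variable `y`. -/
def Yv : R2 := X 1

/-- The vector field (derivation) `p·∂/∂x + q·∂/∂y`. -/
def vf (p q : R2) : Der2 := MvPolynomial.mkDerivation ℂ ![p, q]

lemma vf_X0 (p q : R2) : vf p q (X 0) = p := by simp [vf, mkDerivation_X]
lemma vf_X1 (p q : R2) : vf p q (X 1) = q := by simp [vf, mkDerivation_X]

lemma vf_ext {D : Der2} {p q : R2} (h0 : D (X 0) = p) (h1 : D (X 1) = q) : D = vf p q := by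
  apply MvPolynomial.derivation_ext
  intro i
  fin_cases i
  · show D (X 0) = vf p q (X 0); rw [vf_X0]; exact h0
  · show D (X 1) = vf p q (X 1); rw [vf_X1]; exact h1

lemma vf_smul (c : ℂ) (p q : R2) : c • vf p q = vf (c • p) (c • q) :=
  vf_ext (by simp [vf_X0]) (by simp [vf_X1])

lemma vf_zero : vf 0 0 = 0 := (vf_ext (by simp) (by simp)).symm

lemma vf_Xv (p q : R2) : vf p q Xv = p := vf_X0 p q
lemma vf_Yv (p q : R2) : vf p q Yv = q := vf_X1 p q

lemma vf_C_mul (p q r : R2) (c : ℂ) : vf p q (C c * r) = C c * vf p q r := by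
  rw [← smul_eq_C_mul, ← smul_eq_C_mul, Derivation.map_smul]

lemma E_pow_Y (a : ℂ) (i : ℕ) : vf (C a * Xv) Yv (Yv ^ i) = (i : ℂ) • Yv ^ i := by
  cases i with
  | zero => simp
  | succ n =>
    rw [Derivation.leibniz_pow, Nat.succ_sub_one, vf_Yv, smul_eq_mul, ← pow_succ,
      ← Nat.cast_smul_eq_nsmul ℂ]

lemma F_pow_Y (j i : ℕ) : vf (Yv ^ j) 0 (Yv ^ i) = 0 := by
  cases i with
  | zero => simp
  | succ n => rw [Derivation.leibniz_pow, Nat.succ_sub_one, vf_Yv]; simp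

lemma G_pow_Y (i : ℕ) : vf 0 1 (Yv ^ (i+1)) = ((i : ℂ) + 1) • Yv ^ i := by
  rw [Derivation.leibniz_pow, Nat.succ_sub_one, vf_Yv, smul_eq_mul, mul_one,
    ← Nat.cast_smul_eq_nsmul ℂ]
  norm_cast

lemma brEG (a : ℂ) : ⁅vf (C a * Xv) Yv, vf 0 1⁆ = (-1 : ℂ) • vf 0 1 := by
  rw [vf_smul, smul_zero]
  refine vf_ext ?_ ?_ <;>
    simp [Derivation.commutator_apply, vf_X0, vf_X1, vf_C_mul, vf_Xv, vf_Yv,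
      Derivation.map_one_eq_zero]

lemma brEF (a : ℂ) (i : ℕ) :
    ⁅vf (C a * Xv) Yv, vf (Yv ^ i) 0⁆ = ((i : ℂ) - a) • vf (Yv ^ i) 0 := by
  rw [vf_smul, smul_zero]
  refine vf_ext ?_ ?_
  · rw [Derivation.commutator_apply, vf_X0, vf_X0, E_pow_Y, vf_C_mul, vf_Xv,
      ← smul_eq_C_mul, sub_smul]
  · rw [Derivation.commutator_apply, vf_X1, vf_X1, map_zero, vf_Yv, sub_zero]

lemma brGF (i : ℕ) : ⁅vf 0 1, vf (Yv ^ (i+1)) 0⁆ = ((i : ℂ) + 1) • vf (Yv ^ i) 0 := by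
  rw [vf_smul, smul_zero]
  refine vf_ext ?_ ?_
  · rw [Derivation.commutator_apply, vf_X0, vf_X0, G_pow_Y, map_zero, sub_zero]
  · rw [Derivation.commutator_apply, vf_X1, vf_X1, map_zero, Derivation.map_one_eq_zero,
      sub_zero]

lemma brFF (i j : ℕ) : ⁅vf (Yv ^ i) 0, vf (Yv ^ j) 0⁆ = 0 := by
  rw [← vf_zero]
  refine vf_ext ?_ ?_
  · rw [Derivation.commutator_apply, vf_X0, vf_X0, F_pow_Y, F_pow_Y, sub_zero]
  · rw [Derivation.commutator_apply, vf_X1, vf_X1, map_zero, map_zero, sub_zero]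

lemma F0_eq : vf (Yv ^ 0) 0 = vf 1 0 := by rw [pow_zero]

lemma brGF0 : ⁅vf 0 1, vf 1 0⁆ = 0 := by
  rw [← F0_eq, ← vf_zero]
  refine vf_ext ?_ ?_
  · simp [Derivation.commutator_apply, vf_X0, Derivation.map_one_eq_zero]
  · simp [Derivation.commutator_apply, vf_X1, Derivation.map_one_eq_zero]

lemma brEF0 (a : ℂ) : ⁅vf (C a * Xv) Yv, vf 1 0⁆ = (-a) • vf 1 0 := by
  rw [← F0_eq, brEF]
  norm_num

lemma G_ne_zero : vf 0 1 ≠ 0 := by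
  intro h
  have h1 : vf 0 1 (X 1) = (0 : Der2) (X 1) := by rw [h]
  rw [vf_X1] at h1
  simp at h1

lemma lie_mem_of_forall {s t : Set Der2} {N : Submodule ℂ Der2}
    (h : ∀ x ∈ s, ∀ y ∈ t, ⁅x, y⁆ ∈ N) :
    ∀ x ∈ Submodule.span ℂ s, ∀ y ∈ Submodule.span ℂ t, ⁅x, y⁆ ∈ N := by
  have aux : ∀ x : Der2, (∀ y ∈ t, ⁅x, y⁆ ∈ N) → ∀ y ∈ Submodule.span ℂ t, ⁅x, y⁆ ∈ N := by
    intro x hx y hy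
    induction hy using Submodule.span_induction with
    | mem y hy => exact hx y hy
    | zero =>
      have e : ⁅x, (0 : Der2)⁆ = 0 := lie_zero x
      rw [e]; exact N.zero_mem
    | add y z _ _ hy hz =>
      have e : ⁅x, y + z⁆ = ⁅x, y⁆ + ⁅x, z⁆ := lie_add x y z
      rw [e]; exact N.add_mem hy hz
    | smul c y _ hy =>
      have e : ⁅x, c • y⁆ = c • ⁅x, y⁆ := lie_smul c x y
      rw [e]; exact N.smul_mem c hy
  intro x hx
  induction hx using Submodule.span_induction with
  | mem x hxs => exact aux x (h x hxs)
  | zero =>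
    intro y hy
    have e : ⁅(0 : Der2), y⁆ = 0 := zero_lie y
    rw [e]; exact N.zero_mem
  | add x z _ _ h1 h2 =>
    intro y hy
    have e : ⁅x + z, y⁆ = ⁅x, y⁆ + ⁅z, y⁆ := add_lie x z y
    rw [e]; exact N.add_mem (h1 y hy) (h2 y hy)
  | smul c x _ h1 =>
    intro y hy
    have e : ⁅c • x, y⁆ = c • ⁅x, y⁆ := smul_lie c x y
    rw [e]; exact N.smul_mem c (h1 y hy)

lemma derived_step {g : LieSubalgebra ℂ Der2} {I : LieIdeal ℂ ↥g} {N' N : Submodule ℂ Der2}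
    (hI : ∀ z : g, z ∈ I → (z : Der2) ∈ N')
    (h : ∀ x ∈ N', ∀ y ∈ N', ⁅x, y⁆ ∈ N) :
    ∀ z : g, z ∈ ⁅I, I⁆ → (z : Der2) ∈ N := by
  intro z hz
  rw [← LieSubmodule.mem_toSubmodule, LieSubmodule.lieIdeal_oper_eq_linear_span'] at hz
  induction hz using Submodule.span_induction with
  | mem w hw =>
    obtain ⟨x, hx, n, hn, rfl⟩ := hw
    rw [LieSubalgebra.coe_bracket]
    exact h _ (hI x hx) _ (hI n hn)
  | zero => simpa using N.zero_mem
  | add x y _ _ hx hy => simpa using N.add_mem hx hy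
  | smul c x _ hx => simpa using N.smul_mem c hx

def Pset (k : ℕ) : Set Der2 := {D | ∃ i, 1 ≤ i ∧ i ≤ k ∧ D = vf (Yv ^ i) 0}
def Tset (k : ℕ) : Set Der2 := {vf 1 0, vf 0 1} ∪ Pset k
def Sset (a : ℂ) (k : ℕ) : Set Der2 := {vf (C a * Xv) Yv, vf 1 0, vf 0 1} ∪ Pset k
def Uset (k : ℕ) : Set Der2 := {D | ∃ i, i < k ∧ D = vf (Yv ^ i) 0}

lemma GmemT (k : ℕ) : vf 0 1 ∈ Tset k := Or.inl (Or.inr rfl)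

lemma FmemT (k i : ℕ) (h : i ≤ k) : vf (Yv ^ i) 0 ∈ Tset k := by
  cases i with
  | zero => rw [F0_eq]; exact Or.inl (Or.inl rfl)
  | succ n => exact Or.inr ⟨n+1, Nat.succ_le_succ (Nat.zero_le n), h, rfl⟩

lemma memT {k : ℕ} {D : Der2} (h : D ∈ Tset k) :
    D = vf 0 1 ∨ ∃ i, i ≤ k ∧ D = vf (Yv ^ i) 0 := by
  simp only [Tset, Pset, Set.mem_union, Set.mem_insert_iff, Set.mem_singleton_iff,
    Set.mem_setOf_eq] at h
  rcases h with (rfl | rfl) | ⟨i, _, hik, rfl⟩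
  · exact Or.inr ⟨0, Nat.zero_le k, F0_eq.symm⟩
  · exact Or.inl rfl
  · exact Or.inr ⟨i, hik, rfl⟩

lemma memS {a : ℂ} {k : ℕ} {D : Der2} (h : D ∈ Sset a k) :
    D = vf (C a * Xv) Yv ∨ D = vf 0 1 ∨ ∃ i, i ≤ k ∧ D = vf (Yv ^ i) 0 := by
  simp only [Sset, Pset, Set.mem_union, Set.mem_insert_iff, Set.mem_singleton_iff,
    Set.mem_setOf_eq] at h
  rcases h with (rfl | rfl | rfl) | ⟨i, _, hik, rfl⟩
  · exact Or.inl rfl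
  · exact Or.inr (Or.inr ⟨0, Nat.zero_le k, F0_eq.symm⟩)
  · exact Or.inr (Or.inl rfl)
  · exact Or.inr (Or.inr ⟨i, hik, rfl⟩)

lemma TsubS (a : ℂ) (k : ℕ) : Tset k ⊆ Sset a k := by
  intro x hx
  rcases hx with h | h
  · rcases h with rfl | rfl
    · exact Or.inl (Or.inr (Or.inl rfl))
    · exact Or.inl (Or.inr (Or.inr rfl))
  · exact Or.inr h

lemma hGFmemT (k : ℕ) : ∀ j ≤ k, ⁅vf 0 1, vf (Yv ^ j) 0⁆ ∈ Submodule.span ℂ (Tset k) := by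
  intro j hj
  cases j with
  | zero => rw [F0_eq, brGF0]; exact Submodule.zero_mem _
  | succ n =>
    rw [brGF]
    exact Submodule.smul_mem _ _ (Submodule.subset_span (FmemT k n (Nat.le_of_succ_le hj)))

lemma keyST (a : ℂ) (k : ℕ) :
    ∀ x ∈ Sset a k, ∀ y ∈ Sset a k, ⁅x, y⁆ ∈ Submodule.span ℂ (Tset k) := by
  intro x hx y hy
  have hEG : ⁅vf (C a * Xv) Yv, vf 0 1⁆ ∈ Submodule.span ℂ (Tset k) := by
    rw [brEG]; exact Submodule.smul_mem _ _ (Submodule.subset_span (GmemT k))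
  have hEF : ∀ i ≤ k, ⁅vf (C a * Xv) Yv, vf (Yv ^ i) 0⁆ ∈ Submodule.span ℂ (Tset k) := by
    intro i hik
    rw [brEF]; exact Submodule.smul_mem _ _ (Submodule.subset_span (FmemT k i hik))
  rcases memS hx with rfl | rfl | ⟨i, hik, rfl⟩ <;> rcases memS hy with rfl | rfl | ⟨j, hjk, rfl⟩
  · rw [lie_self]; exact Submodule.zero_mem _
  · exact hEG
  · exact hEF j hjk
  · rw [← lie_skew]; exact Submodule.neg_mem _ hEG
  · rw [lie_self]; exact Submodule.zero_mem _
  · exact hGFmemT k j hjk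
  · rw [← lie_skew]; exact Submodule.neg_mem _ (hEF i hik)
  · rw [← lie_skew]; exact Submodule.neg_mem _ (hGFmemT k i hik)
  · rw [brFF]; exact Submodule.zero_mem _

lemma keyTU (k : ℕ) :
    ∀ x ∈ Tset k, ∀ y ∈ Tset k, ⁅x, y⁆ ∈ Submodule.span ℂ (Uset k) := by
  have hGF : ∀ j, j ≤ k → 1 ≤ j ∨ True →
      ⁅vf 0 1, vf (Yv ^ j) 0⁆ ∈ Submodule.span ℂ (Uset k) := by
    intro j hj _
    cases j with
    | zero => rw [F0_eq, brGF0]; exact Submodule.zero_mem _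
    | succ n =>
      rw [brGF]
      exact Submodule.smul_mem _ _
        (Submodule.subset_span ⟨n, Nat.lt_of_succ_le hj, rfl⟩)
  intro x hx y hy
  rcases memT hx with rfl | ⟨i, hik, rfl⟩ <;> rcases memT hy with rfl | ⟨j, hjk, rfl⟩
  · rw [lie_self]; exact Submodule.zero_mem _
  · exact hGF j hjk (Or.inr trivial)
  · rw [← lie_skew]; exact Submodule.neg_mem _ (hGF i hik (Or.inr trivial))
  · rw [brFF]; exact Submodule.zero_mem _

lemma keyU0 (k : ℕ) :
    ∀ x ∈ Uset k, ∀ y ∈ Uset k, ⁅x, y⁆ ∈ (⊥ : Submodule ℂ Der2) := by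
  rintro x ⟨i, _, rfl⟩ y ⟨j, _, rfl⟩
  rw [brFF]
  exact Submodule.zero_mem _

def gdef (a : ℂ) (k : ℕ) : LieSubalgebra ℂ Der2 where
  toSubmodule := Submodule.span ℂ (Sset a k)
  lie_mem' := fun {x y} hx hy =>
    Submodule.span_mono (TsubS a k) (lie_mem_of_forall (keyST a k) x hx y hy)


set_option maxHeartbeats 1000000 in
/-- for a ∈ ℂ with a ≠ 0 and a ≠ k (k ≥ 1), the Lie subalgebra of
Der(ℂ[x,y]) spanned by a·x·∂/∂x + y·∂/∂y, ∂/∂x, ∂/∂y, y·∂/∂x, …, y^k·∂/∂x is solvable,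
non-nilpotent, and its derived subalgebra is the span of ∂/∂x, ∂/∂y, y·∂/∂x, …, y^k·∂/∂x. -/
theorem stmt11 (k : ℕ) (hk : 1 ≤ k) (a : ℂ) (ha0 : a ≠ 0) (hak : a ≠ (k : ℂ)) :
    ∃ g : LieSubalgebra ℂ Der2,
      (g : Set Der2) = (Submodule.span ℂ
          ({vf (C a * Xv) Yv, vf 1 0, vf 0 1} ∪ {D | ∃ i, 1 ≤ i ∧ i ≤ k ∧ D = vf (Yv ^ i) 0})
            : Set Der2) ∧
      LieAlgebra.IsSolvable g ∧ ¬ LieRing.IsNilpotent g ∧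
      Submodule.span ℂ {Z : Der2 | ∃ X ∈ g, ∃ Y ∈ g, Z = ⁅X, Y⁆} =
        Submodule.span ℂ ({vf 1 0, vf 0 1} ∪ {D | ∃ i, 1 ≤ i ∧ i ≤ k ∧ D = vf (Yv ^ i) 0}) := by
  have hEg : vf (C a * Xv) Yv ∈ gdef a k := Submodule.subset_span (Or.inl (Or.inl rfl))
  have hGg : vf 0 1 ∈ gdef a k := Submodule.subset_span (Or.inl (Or.inr (Or.inr rfl)))
  have hFg : ∀ i, 1 ≤ i → i ≤ k → vf (Yv ^ i) 0 ∈ gdef a k := fun i h1 h2 =>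
    Submodule.subset_span (Or.inr ⟨i, h1, h2, rfl⟩)
  refine ⟨gdef a k, rfl, ?_, ?_, ?_⟩
  · -- solvable
    have hd1 : ∀ z : gdef a k, z ∈ LieAlgebra.derivedSeries ℂ (gdef a k) 1 →
        (z : Der2) ∈ Submodule.span ℂ (Tset k) := by
      intro z hz
      rw [LieAlgebra.derivedSeries_def, LieAlgebra.derivedSeriesOfIdeal_succ] at hz
      exact derived_step (fun w _ => w.2) (lie_mem_of_forall (keyST a k)) z hz
    have hd2 : ∀ z : gdef a k, z ∈ LieAlgebra.derivedSeries ℂ (gdef a k) 2 →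
        (z : Der2) ∈ Submodule.span ℂ (Uset k) := by
      intro z hz
      rw [LieAlgebra.derivedSeries_def, LieAlgebra.derivedSeriesOfIdeal_succ] at hz
      exact derived_step hd1 (lie_mem_of_forall (keyTU k)) z hz
    have hd3 : ∀ z : gdef a k, z ∈ LieAlgebra.derivedSeries ℂ (gdef a k) 3 →
        (z : Der2) ∈ (⊥ : Submodule ℂ Der2) := by
      intro z hz
      rw [LieAlgebra.derivedSeries_def, LieAlgebra.derivedSeriesOfIdeal_succ] at hz
      exact derived_step hd2 (lie_mem_of_forall (keyU0 k)) z hz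
    refine (LieAlgebra.isSolvable_iff ℂ _).mpr ⟨3, ?_⟩
    rw [LieSubmodule.eq_bot_iff]
    intro m hm
    exact Subtype.ext ((Submodule.mem_bot ℂ).mp (hd3 m hm))
  · -- not nilpotent
    intro hnil
    obtain ⟨n, hn⟩ := (LieModule.isNilpotent_iff ℂ _ _).mp hnil
    set Gel : gdef a k := ⟨vf 0 1, hGg⟩ with hGel
    set Eel : gdef a k := ⟨vf (C a * Xv) Yv, hEg⟩ with hEel
    have hbr : ⁅Eel, Gel⁆ = (-1 : ℂ) • Gel := by
      apply Subtype.ext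
      rw [LieSubalgebra.coe_bracket]
      show ⁅vf (C a * Xv) Yv, vf 0 1⁆ = (-1 : ℂ) • vf 0 1
      exact brEG a
    have hmem : ∀ n, Gel ∈ LieModule.lowerCentralSeries ℂ (gdef a k) (gdef a k) n := by
      intro n
      induction n with
      | zero => exact LieSubmodule.mem_top _
      | succ n ih =>
        rw [LieModule.lowerCentralSeries_succ]
        have h1 : ⁅Eel, Gel⁆ ∈
            ⁅(⊤ : LieIdeal ℂ (gdef a k)), LieModule.lowerCentralSeries ℂ (gdef a k) (gdef a k) n⁆ :=
          LieSubmodule.lie_mem_lie (LieSubmodule.mem_top _) ih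
        rw [hbr] at h1
        have h3 : ((-1 : ℂ) • ((-1 : ℂ) • Gel)) = Gel := by
          rw [smul_smul, neg_mul_neg, one_mul, one_smul]
        rw [← h3]
        rw [← LieSubmodule.mem_toSubmodule] at h1 ⊢
        exact Submodule.smul_mem _ _ h1
    have := hmem n
    rw [hn] at this
    have h0 : Gel = 0 := (LieSubmodule.mem_bot _).mp this
    exact G_ne_zero (congrArg Subtype.val h0)
  · -- derived span
    apply le_antisymm
    · rw [Submodule.span_le]
      rintro Z ⟨Xe, hX, Ye, hY, rfl⟩
      exact lie_mem_of_forall (keyST a k) Xe hX Ye hY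
    · rw [Submodule.span_le]
      intro D hD
      have hD' : D ∈ Tset k := hD
      rcases memT hD' with rfl | ⟨i, hik, rfl⟩
      · have e : vf 0 1 = (-1 : ℂ) • ⁅vf (C a * Xv) Yv, vf 0 1⁆ := by
          rw [brEG, smul_smul, neg_mul_neg, one_mul, one_smul]
        rw [e]
        exact Submodule.smul_mem _ _ (Submodule.subset_span ⟨_, hEg, _, hGg, rfl⟩)
      · rcases eq_or_lt_of_le hik with rfl | hlt
        · have hc : (i : ℂ) - a ≠ 0 := sub_ne_zero.mpr (Ne.symm hak)
          have e : vf (Yv ^ i) 0 = ((i : ℂ) - a)⁻¹ • ⁅vf (C a * Xv) Yv, vf (Yv ^ i) 0⁆ := by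
            rw [brEF, smul_smul, inv_mul_cancel₀ hc, one_smul]
          rw [e]
          exact Submodule.smul_mem _ _
            (Submodule.subset_span ⟨_, hEg, _, hFg i hk le_rfl, rfl⟩)
        · have e : vf (Yv ^ i) 0 = ((i : ℂ) + 1)⁻¹ • ⁅vf 0 1, vf (Yv ^ (i+1)) 0⁆ := by
            rw [brGF, smul_smul, inv_mul_cancel₀ (Nat.cast_add_one_ne_zero i), one_smul]
          rw [e]
          exact Submodule.smul_mem _ _
            (Submodule.subset_span ⟨_, hGg, _,
              hFg (i+1) (Nat.succ_le_succ (Nat.zero_le i)) hlt, rfl⟩)
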